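/- For the sequence defined by f_0 = 1 and f_k = (1 - 1/(2k)) f_{k-1} for k ≥ 1, one has the closed form f_k = 4^{-k} * (2k choose k) for all k ≥ 0, and for every integer k ≥ 1 the two-sided bound 1/sqrt(π(k+1)) ≤ f_k ≤ 1/sqrt(πk). -/

import Mathlib

open Finset

private lemma fhu_closed (f : ℕ → ℝ)
    (hf0 : f 0 = 1)
    (hf : ∀ k : ℕ, 1 ≤ k → f k = (1 - 1 / (2 * (k : ℝ))) * f (k - 1)) :
    ∀ k : ℕ, f k = (4 : ℝ)⁻¹ ^ k * (Nat.choose (2 * k) k : ℝ) := by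
  intro k
  induction k with
  | zero => simpa using hf0
  | succ n ih =>
    have h := hf (n + 1) (Nat.le_add_left 1 n)
    simp only [Nat.add_sub_cancel] at h
    rw [h, ih]
    have hcb := Nat.succ_mul_centralBinom_succ n
    have hcb' : ((n : ℝ) + 1) * (Nat.choose (2 * (n + 1)) (n + 1) : ℝ)
        = 2 * (2 * n + 1) * (Nat.choose (2 * n) n : ℝ) := by
      have := congrArg (fun m : ℕ => (m : ℝ)) hcb
      simp only [Nat.centralBinom] at this
      push_cast at this
      convert this using 3
    have hn1 : ((n : ℝ) + 1) ≠ 0 := by positivity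
    have h2n1 : (2 * ((n : ℝ) + 1)) ≠ 0 := by positivity
    push_cast
    rw [pow_succ]
    have : (Nat.choose (2 * (n + 1)) (n + 1) : ℝ)
        = 2 * (2 * n + 1) * (Nat.choose (2 * n) n : ℝ) / ((n : ℝ) + 1) := by
      field_simp
      linarith [hcb']
    push_cast at this
    rw [this]
    field_simp
    ring

private lemma fhu_prod (f : ℕ → ℝ)
    (hf0 : f 0 = 1)
    (hf : ∀ k : ℕ, 1 ≤ k → f k = (1 - 1 / (2 * (k : ℝ))) * f (k - 1)) :
    ∀ k : ℕ, (2 * (k : ℝ) + 1) * f k ^ 2 * Real.Wallis.W k = 1 := by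
  intro k
  induction k with
  | zero => simp [Real.Wallis.W, hf0]
  | succ n ih =>
    have h := hf (n + 1) (Nat.le_add_left 1 n)
    simp only [Nat.add_sub_cancel] at h
    rw [Real.Wallis.W_succ, h]
    have h1 : (2 * ((n : ℝ) + 1)) ≠ 0 := by positivity
    have h2 : (2 * (n : ℝ) + 1) ≠ 0 := by positivity
    have h3 : (2 * (n : ℝ) + 2) ≠ 0 := by positivity
    have h4 : (2 * (n : ℝ) + 3) ≠ 0 := by positivity
    push_cast
    field_simp
    linear_combination ((2 * (n : ℝ) + 3) * (2 * n + 1) * (2 * n + 2) ^ 2 - (2 * (n : ℝ) + 1) ^ 2 * (2 * n + 3) ^ 2) * ih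

theorem fhu_closed_form_and_bounds (f : ℕ → ℝ)
    (hf0 : f 0 = 1)
    (hf : ∀ k : ℕ, 1 ≤ k → f k = (1 - 1 / (2 * (k : ℝ))) * f (k - 1)) :
    (∀ k : ℕ, f k = (4 : ℝ)⁻¹ ^ k * (Nat.choose (2 * k) k : ℝ)) ∧
    (∀ k : ℕ, 1 ≤ k →
      1 / Real.sqrt (Real.pi * ((k : ℝ) + 1)) ≤ f k ∧
      f k ≤ 1 / Real.sqrt (Real.pi * (k : ℝ))) := by
  have hclosed := fhu_closed f hf0 hf
  refine ⟨hclosed, ?_⟩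
  intro k hk
  have hfpos : 0 < f k := by
    rw [hclosed k]
    have : 0 < Nat.choose (2 * k) k := Nat.choose_pos (by omega)
    have : (0 : ℝ) < (Nat.choose (2 * k) k : ℝ) := by exact_mod_cast this
    positivity
  have hW := fhu_prod f hf0 hf k
  have hWpos := Real.Wallis.W_pos k
  have hWle := Real.Wallis.W_le k
  have hleW := Real.Wallis.le_W k
  have hπ := Real.pi_pos
  have hk1 : (1 : ℝ) ≤ (k : ℝ) := by exact_mod_cast hk
  -- from hW : W k = 1 / ((2k+1) f k ^ 2)
  have hd : 0 < (2 * (k : ℝ) + 1) * f k ^ 2 := by positivity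
  -- lower bound on f k ^ 2
  have hlow : 1 / (Real.pi * ((k : ℝ) + 1)) ≤ f k ^ 2 := by
    -- W k ≤ π/2, and (2k+1) f^2 * W = 1
    rw [div_le_iff₀ (by positivity)]
    nlinarith [mul_le_mul_of_nonneg_left hWle hd.le]
  have hup : f k ^ 2 ≤ 1 / (Real.pi * (k : ℝ)) := by
    rw [le_div_iff₀ (by positivity)]
    have := mul_le_mul_of_nonneg_left hleW hd.le
    rw [hW] at this
    -- (2k+1) f^2 * ((2k+1)/(2k+2) * (π/2)) ≤ 1
    have h3 : (2 * (k : ℝ) + 2) ≠ 0 := by positivity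
    rw [div_mul_eq_mul_div, ← mul_div_assoc, div_le_one (by positivity)] at this
    nlinarith [sq_nonneg (f k), this]
  constructor
  · have e : 1 / Real.sqrt (Real.pi * ((k : ℝ) + 1)) = Real.sqrt (1 / (Real.pi * ((k : ℝ) + 1))) := by
      rw [one_div, one_div, ← Real.sqrt_inv]
    rw [e, ← Real.sqrt_sq hfpos.le]
    exact Real.sqrt_le_sqrt hlow
  · have e : 1 / Real.sqrt (Real.pi * (k : ℝ)) = Real.sqrt (1 / (Real.pi * (k : ℝ))) := by
      rw [one_div, one_div, ← Real.sqrt_inv]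
    rw [e, ← Real.sqrt_sq hfpos.le]
    exact Real.sqrt_le_sqrt hup
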